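/- For every α ≥ 2, the polynomial r_{α−1} := Σ_{j=0}^{α−1} s^-_j equals y·Σ (−1)^{|c|+α−1}·(3/2)^{Θ(c)}·[c] + z·Σ (−1)^{|c|+α}·(3/2)^{Θ̃(c)}·{c}, where the first sum ranges over compositions c ⊨ α−1 whose last part is odd and the second sum ranges over compositions c ⊨ α whose last part is odd. -/

import Mathlib

open MvPolynomial

/-- We work in `ℚ[x_1,x_2,…][y,z]`: polynomials in the two variables `y` (encoded `false`)
and `z` (encoded `true`) over the ring `ℚ[x_1,x_2,…]`.  `sPair j = (s^-_j, s^+_j)` where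
`s^-_0 = z`, `s^+_0 = 2y`, and for `j ≥ 1`,
`s^-_j = (x_j − 1)·s^-_{j−1} + (1/2)·x_j·s^+_{j−1}`,
`s^+_j = x_j·s^-_{j−1} + (1/2)·x_j·s^+_{j−1}`. -/
noncomputable def sPair : ℕ →
    MvPolynomial Bool (MvPolynomial ℕ ℚ) × MvPolynomial Bool (MvPolynomial ℕ ℚ)
  | 0 => (X true, 2 * X false)
  | j + 1 =>
    ((C (X (j + 1) : MvPolynomial ℕ ℚ) - 1) * (sPair j).1 +
        C ((MvPolynomial.C (1 / 2 : ℚ) * X (j + 1) : MvPolynomial ℕ ℚ)) * (sPair j).2,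
      C (X (j + 1) : MvPolynomial ℕ ℚ) * (sPair j).1 +
        C ((MvPolynomial.C (1 / 2 : ℚ) * X (j + 1) : MvPolynomial ℕ ℚ)) * (sPair j).2)

/-- `s^-_j`. -/
noncomputable def smP (j : ℕ) : MvPolynomial Bool (MvPolynomial ℕ ℚ) := (sPair j).1

/-- The monomial `[c] = x_1·x_{1+c_1}·x_{1+c_1+c_2}···x_{1+c_1+⋯+c_{ℓ−1}}` attached to a
composition with list of parts `l` (with the convention `[()] = 0`). -/
noncomputable def brk (l : List ℕ) : MvPolynomial ℕ ℚ :=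
  if l.length = 0 then 0
  else ∏ k ∈ Finset.range l.length, X (1 + (l.take k).sum)

/-- The monomial `{c} = x_{c_1}·x_{c_1+c_2}···x_{c_1+⋯+c_{ℓ−1}}` attached to a composition
with list of parts `l` (the empty product `1` when `ℓ = 1`). -/
noncomputable def curly (l : List ℕ) : MvPolynomial ℕ ℚ :=
  ∏ k ∈ Finset.range (l.length - 1), X ((l.take (k + 1)).sum)

/-- `Θ(c) = #{ j : 1 ≤ j ≤ ℓ−1, c_j = 1 }`. -/
def theta (l : List ℕ) : ℕ :=
  ((l.take (l.length - 1)).filter (· == 1)).length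

/-- `Θ̃(c) = #{ i : 2 ≤ i ≤ ℓ−1, c_i = 1 }`. -/
def thetaTilde (l : List ℕ) : ℕ :=
  (((l.drop 1).take (l.length - 2)).filter (· == 1)).length

/-! ### auxiliary definitions -/

/-- increment the last entry of a list -/
def incLast (l : List ℕ) : List ℕ := l.dropLast ++ [l.getLastD 0 + 1]

/-- list of all compositions (as lists of positive parts) of `n` -/
def comps : ℕ → List (List ℕ)
  | 0 => [[]]
  | 1 => [[1]]
  | n + 2 => ((comps (n + 1)).map (· ++ [1])) ++ ((comps (n + 1)).map incLast)

lemma pos_sum_ne_nil {l : List ℕ} (hp : ∀ i ∈ l, 0 < i) (h : l.sum ≠ 0) : l ≠ [] := by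
  intro e; subst e; simp at h

lemma eq_nil_of_sum_eq_zero {l : List ℕ} (hp : ∀ i ∈ l, 0 < i) (h : l.sum = 0) : l = [] := by
  cases l with
  | nil => rfl
  | cons a t => simp at h; exact absurd h.1 (hp a (by simp)).ne'

lemma mem_comps : ∀ n l, l ∈ comps n ↔ (l.sum = n ∧ ∀ i ∈ l, 0 < i)
  | 0, l => by
    constructor
    · rintro h; simp [comps] at h; subst h; simp
    · rintro ⟨h1, h2⟩; simp [comps, eq_nil_of_sum_eq_zero h2 h1]
  | 1, l => by
    constructor
    · rintro h; simp [comps] at h; subst h; simp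
    · rintro ⟨h1, h2⟩
      cases l with
      | nil => simp at h1
      | cons a t =>
        simp at h1
        have ha : 0 < a := h2 a (by simp)
        have ha1 : a = 1 := by omega
        subst ha1
        have : t.sum = 0 := by omega
        have := eq_nil_of_sum_eq_zero (fun i hi => h2 i (by simp [hi])) this
        subst this; simp [comps]
  | n + 2, l => by
    constructor
    · intro h
      simp only [comps, List.mem_append, List.mem_map] at h
      rcases h with ⟨l', hl', rfl⟩ | ⟨l', hl', rfl⟩
      · obtain ⟨h1, h2⟩ := (mem_comps (n + 1) l').1 hl'
        constructor
        · simp [h1]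
        · intro i hi; simp at hi
          rcases hi with hi | hi
          · exact h2 i hi
          · omega
      · obtain ⟨h1, h2⟩ := (mem_comps (n + 1) l').1 hl'
        have hne : l' ≠ [] := pos_sum_ne_nil h2 (by omega)
        have hdg : l'.dropLast ++ [l'.getLast hne] = l' := List.dropLast_append_getLast hne
        have hgd : l'.getLastD 0 = l'.getLast hne := by
          conv_lhs => rw [← hdg]
          exact List.getLastD_concat
        constructor
        · show (l'.dropLast ++ [l'.getLastD 0 + 1]).sum = n + 2
          have : l'.dropLast.sum + l'.getLast hne = l'.sum := by
            conv_rhs => rw [← hdg]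
            simp
          simp only [List.sum_append, List.sum_cons, List.sum_nil]
          rw [hgd]; omega
        · intro i hi
          simp only [incLast, List.mem_append, List.mem_singleton] at hi
          rcases hi with hi | hi
          · exact h2 i (List.dropLast_subset _ hi)
          · omega
    · rintro ⟨h1, h2⟩
      have hne : l ≠ [] := pos_sum_ne_nil h2 (by omega)
      have hdg : l.dropLast ++ [l.getLast hne] = l := List.dropLast_append_getLast hne
      have hsum : l.dropLast.sum + l.getLast hne = l.sum := by
        conv_rhs => rw [← hdg]
        simp
      have hposd : ∀ i ∈ l.dropLast, 0 < i := fun i hi => h2 i (List.dropLast_subset _ hi)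
      have hgpos : 0 < l.getLast hne := h2 _ (List.getLast_mem hne)
      simp only [comps, List.mem_append, List.mem_map]
      rcases Nat.lt_or_ge (l.getLast hne) 2 with hlt | hge
      · left
        refine ⟨l.dropLast, (mem_comps (n + 1) _).2 ⟨by omega, hposd⟩, ?_⟩
        have : l.getLast hne = 1 := by omega
        rw [← this]; exact hdg
      · right
        refine ⟨l.dropLast ++ [l.getLast hne - 1], (mem_comps (n + 1) _).2 ⟨by simp; omega, ?_⟩, ?_⟩
        · intro i hi; simp at hi; rcases hi with hi | hi
          · exact hposd i hi
          · omega
        · show incLast _ = l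
          rw [incLast, List.dropLast_concat, List.getLastD_concat]
          conv_rhs => rw [← hdg]
          congr 1
          simp; omega
lemma getLastD_eq_getLast {l : List ℕ} (h : l ≠ []) : l.getLastD 0 = l.getLast h := by
  conv_lhs => rw [← List.dropLast_append_getLast h]
  exact List.getLastD_concat

lemma comps_nodup : ∀ n, (comps n).Nodup
  | 0 => by simp [comps]
  | 1 => by simp [comps]
  | n + 2 => by
    have ih := comps_nodup (n + 1)
    rw [comps]
    refine List.Nodup.append ?_ ?_ ?_
    · exact ih.map fun a b h => by simpa using h
    · refine ih.map_on fun a ha b hb h => ?_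
      obtain ⟨_, hpa⟩ := (mem_comps _ a).1 ha
      obtain ⟨_, hpb⟩ := (mem_comps _ b).1 hb
      simp only [incLast] at h
      have h1 : a.dropLast = b.dropLast ∧ a.getLastD 0 + 1 = b.getLastD 0 + 1 := by
        constructor
        · have := congrArg List.dropLast h; simpa using this
        · have := congrArg (List.getLastD · 0) h; simpa using this
      have hane : a ≠ [] := pos_sum_ne_nil hpa (by omega)
      have hbne : b ≠ [] := pos_sum_ne_nil hpb (by omega)
      calc a = a.dropLast ++ [a.getLastD 0] := by
              rw [getLastD_eq_getLast hane]; exact (List.dropLast_append_getLast hane).symm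
        _ = b.dropLast ++ [b.getLastD 0] := by rw [h1.1, Nat.add_right_cancel h1.2]
        _ = b := by rw [getLastD_eq_getLast hbne]; exact List.dropLast_append_getLast hbne
    · intro x hx hy
      simp only [List.mem_map] at hx hy
      obtain ⟨a, ha, rfl⟩ := hx
      obtain ⟨b, hb, he⟩ := hy
      obtain ⟨hsb, hpb⟩ := (mem_comps _ b).1 hb
      have hbne : b ≠ [] := pos_sum_ne_nil hpb (by omega)
      have h1 : (a ++ [1]).getLastD 0 = 1 := List.getLastD_concat
      have h2 : (incLast b).getLastD 0 = b.getLastD 0 + 1 := List.getLastD_concat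
      have hbpos : 0 < b.getLastD 0 := by
        rw [getLastD_eq_getLast hbne]; exact hpb _ (List.getLast_mem hbne)
      rw [he, h1] at h2
      omega

/-- Bridge: sums over `Composition n` are sums over `comps n`. -/
lemma sum_composition {M : Type*} [AddCommMonoid M] (n : ℕ) (F : List ℕ → M) :
    ∑ c : Composition n, F c.blocks = ((comps n).map F).sum := by
  classical
  rw [← List.sum_toFinset _ (comps_nodup n)]
  refine Finset.sum_bij' (i := fun c _ => c.blocks)
    (j := fun l hl => ⟨l, fun {i} hi => ((mem_comps n l).1 (by simpa using hl)).2 i hi,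
      ((mem_comps n l).1 (by simpa using hl)).1⟩)
    (fun c _ => ?_) (fun l hl => Finset.mem_univ _) (fun c _ => rfl) (fun l hl => rfl)
    (fun c _ => rfl)
  · simp only [List.mem_toFinset]
    exact (mem_comps n c.blocks).2 ⟨c.blocks_sum, fun i hi => c.blocks_pos hi⟩

/-- summation over comps -/
noncomputable def S (f : List ℕ → MvPolynomial ℕ ℚ) (n : ℕ) : MvPolynomial ℕ ℚ :=
  ((comps n).map f).sum

lemma sum_map_add {α : Type*} {M : Type*} [AddCommMonoid M] (l : List α) (f g : α → M) :
    (l.map (fun x => f x + g x)).sum = (l.map f).sum + (l.map g).sum := by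
  induction l with
  | nil => simp
  | cons a t ih => simp [ih]; abel

lemma S_rec (g : List ℕ → MvPolynomial ℕ ℚ) (n : ℕ) :
    S g (n + 2) = ((comps (n + 1)).map (fun l => g (l ++ [1]))).sum
      + ((comps (n + 1)).map (fun l => g (incLast l))).sum := by
  simp [S, comps, List.map_map, Function.comp_def]

/-! ### weights -/

noncomputable def wA (l : List ℕ) : MvPolynomial ℕ ℚ :=
  MvPolynomial.C ((-1 : ℚ) ^ l.length * (3 / 2 : ℚ) ^ theta l) * brk l

noncomputable def aO (l : List ℕ) : MvPolynomial ℕ ℚ :=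
  if Odd (l.getLastD 0) then wA l else 0

noncomputable def aE (l : List ℕ) : MvPolynomial ℕ ℚ :=
  if Odd (l.getLastD 0) then 0 else wA l

noncomputable def a1 (l : List ℕ) : MvPolynomial ℕ ℚ :=
  if l.getLastD 0 = 1 then wA l else 0

noncomputable def wB (l : List ℕ) : MvPolynomial ℕ ℚ :=
  MvPolynomial.C ((-1 : ℚ) ^ l.length * (3 / 2 : ℚ) ^ thetaTilde l) * curly l

noncomputable def bO (l : List ℕ) : MvPolynomial ℕ ℚ :=
  if Odd (l.getLastD 0) then wB l else 0

noncomputable def bE (l : List ℕ) : MvPolynomial ℕ ℚ :=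
  if Odd (l.getLastD 0) then 0 else wB l

noncomputable def b1 (l : List ℕ) : MvPolynomial ℕ ℚ :=
  if l.getLastD 0 = 1 then wB l else 0

lemma exists_concat {l : List ℕ} (h : l ≠ []) : ∃ m a, l = m ++ [a] :=
  ⟨l.dropLast, l.getLast h, (List.dropLast_append_getLast h).symm⟩

/-! ### structural lemmas on brk/curly/theta/thetaTilde -/

lemma brk_concat_indep (m : List ℕ) (a b : ℕ) : brk (m ++ [a]) = brk (m ++ [b]) := by
  unfold brk
  simp only [List.length_append, List.length_singleton]
  refine if_congr Iff.rfl rfl (Finset.prod_congr rfl fun k hk => ?_)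
  simp only [Finset.mem_range] at hk
  rw [List.take_append_of_le_length (by omega), List.take_append_of_le_length (by omega)]

lemma theta_concat (m : List ℕ) (a : ℕ) :
    theta (m ++ [a]) = (m.filter (· == 1)).length := by
  unfold theta
  simp only [List.length_append, List.length_singleton, Nat.add_sub_cancel]
  rw [List.take_left]

lemma curly_concat_indep (m : List ℕ) (a b : ℕ) : curly (m ++ [a]) = curly (m ++ [b]) := by
  unfold curly
  simp only [List.length_append, List.length_singleton, Nat.add_sub_cancel]
  refine Finset.prod_congr rfl fun k hk => ?_
  simp only [Finset.mem_range] at hk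
  rw [List.take_append_of_le_length (by omega), List.take_append_of_le_length (by omega)]

lemma thetaTilde_concat (m : List ℕ) (a : ℕ) :
    thetaTilde (m ++ [a]) = ((m.drop 1).filter (· == 1)).length := by
  unfold thetaTilde
  cases m with
  | nil => simp
  | cons x m' =>
    have e1 : ((x :: m') ++ [a]).drop 1 = m' ++ [a] := rfl
    have e2 : ((x :: m') ++ [a]).length - 2 = m'.length := by
      simp only [List.cons_append, List.length_cons, List.length_append,
        List.length_singleton, List.length_nil]
      omega
    have e3 : (x :: m').drop 1 = m' := rfl
    rw [e1, e2, e3, List.take_left]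

lemma brk_ne_nil {l : List ℕ} (h : l ≠ []) :
    brk l = ∏ k ∈ Finset.range l.length, X (1 + (l.take k).sum) := by
  rw [brk, if_neg (by simpa using h)]

lemma brk_concat (l : List ℕ) (b : ℕ) (h : l ≠ []) :
    brk (l ++ [b]) = brk l * X (1 + l.sum) := by
  rw [brk_ne_nil (by simp), brk_ne_nil h]
  have hlen : (l ++ [b]).length = l.length + 1 := by simp
  rw [hlen, Finset.prod_range_succ, List.take_left]
  congr 1
  refine Finset.prod_congr rfl fun k hk => ?_
  simp only [Finset.mem_range] at hk
  rw [List.take_append_of_le_length (by omega)]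

lemma curly_concat (l : List ℕ) (b : ℕ) (h : l ≠ []) :
    curly (l ++ [b]) = curly l * X l.sum := by
  obtain ⟨m, a, rfl⟩ := exists_concat h
  have e1 : ((m ++ [a]) ++ [b]).length - 1 = m.length + 1 := by
    simp only [List.length_append, List.length_singleton]; omega
  have e2 : (m ++ [a]).length - 1 = m.length := by
    simp only [List.length_append, List.length_singleton]; omega
  rw [curly, curly, e1, e2, Finset.prod_range_succ]
  congr 1
  · refine Finset.prod_congr rfl fun k hk => ?_
    simp only [Finset.mem_range] at hk
    rw [List.take_append_of_le_length
      (by simp only [List.length_append, List.length_singleton]; omega)]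
  · rw [show m.length + 1 = (m ++ [a]).length by simp, List.take_left]

lemma filter_concat_len (m : List ℕ) (a : ℕ) :
    ((m ++ [a]).filter (· == 1)).length
      = (m.filter (· == 1)).length + (if a = 1 then 1 else 0) := by
  rw [List.filter_append]
  simp only [List.length_append]
  by_cases h : a = 1 <;> simp [h]

lemma theta_concat_one (m : List ℕ) (a : ℕ) :
    theta ((m ++ [a]) ++ [1]) = theta (m ++ [a]) + (if a = 1 then 1 else 0) := by
  rw [theta_concat (m ++ [a]) 1, theta_concat m a, filter_concat_len]

lemma thetaTilde_concat_one (m : List ℕ) (a : ℕ) (hm : m = [] → a ≠ 1) :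
    thetaTilde ((m ++ [a]) ++ [1]) = thetaTilde (m ++ [a]) + (if a = 1 then 1 else 0) := by
  rw [thetaTilde_concat (m ++ [a]) 1, thetaTilde_concat m a]
  cases m with
  | nil => simp [if_neg (hm rfl)]
  | cons x m' =>
    simp only [List.cons_append, List.drop_succ_cons, List.drop_zero]
    exact filter_concat_len m' a

lemma incLast_concat (m : List ℕ) (a : ℕ) : incLast (m ++ [a]) = m ++ [a + 1] := by
  rw [incLast, List.dropLast_concat, List.getLastD_concat]

/-! ### elementwise lemmas for the weights -/

lemma wA_inc (l : List ℕ) (h : l ≠ []) : wA (incLast l) = wA l := by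
  obtain ⟨m, a, rfl⟩ := exists_concat h
  rw [incLast_concat]
  unfold wA
  rw [brk_concat_indep m (a + 1) a, theta_concat, theta_concat]
  simp

lemma wB_inc (l : List ℕ) (h : l ≠ []) : wB (incLast l) = wB l := by
  obtain ⟨m, a, rfl⟩ := exists_concat h
  rw [incLast_concat]
  unfold wB
  rw [curly_concat_indep m (a + 1) a, thetaTilde_concat, thetaTilde_concat]
  simp

lemma getLastD_incLast (l : List ℕ) : (incLast l).getLastD 0 = l.getLastD 0 + 1 :=
  List.getLastD_concat

lemma aO_inc (l : List ℕ) (h : l ≠ []) : aO (incLast l) = aE l := by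
  unfold aO aE
  rw [getLastD_incLast, wA_inc l h]
  have hio : Odd (l.getLastD 0 + 1) ↔ ¬ Odd (l.getLastD 0) := Nat.odd_add_one
  by_cases hodd : Odd (l.getLastD 0)
  · rw [if_neg (fun hx => hio.1 hx hodd), if_pos hodd]
  · rw [if_pos (hio.2 hodd), if_neg hodd]

lemma aE_inc (l : List ℕ) (h : l ≠ []) : aE (incLast l) = aO l := by
  unfold aO aE
  rw [getLastD_incLast, wA_inc l h]
  have hio : Odd (l.getLastD 0 + 1) ↔ ¬ Odd (l.getLastD 0) := Nat.odd_add_one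
  by_cases hodd : Odd (l.getLastD 0)
  · rw [if_neg (fun hx => hio.1 hx hodd), if_pos hodd]
  · rw [if_pos (hio.2 hodd), if_neg hodd]

lemma bO_inc (l : List ℕ) (h : l ≠ []) : bO (incLast l) = bE l := by
  unfold bO bE
  rw [getLastD_incLast, wB_inc l h]
  have hio : Odd (l.getLastD 0 + 1) ↔ ¬ Odd (l.getLastD 0) := Nat.odd_add_one
  by_cases hodd : Odd (l.getLastD 0)
  · rw [if_neg (fun hx => hio.1 hx hodd), if_pos hodd]
  · rw [if_pos (hio.2 hodd), if_neg hodd]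

lemma bE_inc (l : List ℕ) (h : l ≠ []) : bE (incLast l) = bO l := by
  unfold bO bE
  rw [getLastD_incLast, wB_inc l h]
  have hio : Odd (l.getLastD 0 + 1) ↔ ¬ Odd (l.getLastD 0) := Nat.odd_add_one
  by_cases hodd : Odd (l.getLastD 0)
  · rw [if_neg (fun hx => hio.1 hx hodd), if_pos hodd]
  · rw [if_pos (hio.2 hodd), if_neg hodd]

lemma getLastD_pos {l : List ℕ} (hp : ∀ i ∈ l, 0 < i) (h : l ≠ []) : 0 < l.getLastD 0 := by
  rw [getLastD_eq_getLast h]; exact hp _ (List.getLast_mem h)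

lemma a1_inc (l : List ℕ) (h : l.getLastD 0 ≠ 0) : a1 (incLast l) = 0 := by
  unfold a1
  rw [getLastD_incLast, if_neg (by omega)]

lemma b1_inc (l : List ℕ) (h : l.getLastD 0 ≠ 0) : b1 (incLast l) = 0 := by
  unfold b1
  rw [getLastD_incLast, if_neg (by omega)]

lemma wA_app1 (l : List ℕ) (h : l ≠ []) :
    wA (l ++ [1]) = -(X (1 + l.sum)) * (wA l + MvPolynomial.C (1 / 2 : ℚ) * a1 l) := by
  obtain ⟨m, a, rfl⟩ := exists_concat h
  simp only [wA, a1]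
  rw [brk_concat _ 1 h, theta_concat_one, List.getLastD_concat]
  simp only [List.length_append, List.length_singleton]
  have hC : (MvPolynomial.C (3 / 2 : ℚ) : MvPolynomial ℕ ℚ)
      = MvPolynomial.C (1 / 2 : ℚ) + 1 := by
    rw [← map_one (MvPolynomial.C (σ := ℕ) (R := ℚ)), ← map_add]
    norm_num
  by_cases ha : a = 1
  · rw [if_pos ha, if_pos ha]
    simp only [map_mul, map_pow, map_neg, map_one, hC]
    ring
  · rw [if_neg ha, if_neg ha, add_zero]
    simp only [map_mul, map_pow, map_neg, map_one, hC]
    ring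

lemma aO_app1 (l : List ℕ) : aO (l ++ [1]) = wA (l ++ [1]) := by
  unfold aO
  rw [List.getLastD_concat, if_pos (by decide)]

lemma a1_app1 (l : List ℕ) : a1 (l ++ [1]) = wA (l ++ [1]) := by
  unfold a1
  rw [List.getLastD_concat, if_pos rfl]

lemma aE_app1 (l : List ℕ) : aE (l ++ [1]) = 0 := by
  unfold aE
  rw [List.getLastD_concat, if_pos (by decide)]

lemma bO_app1 (l : List ℕ) : bO (l ++ [1]) = wB (l ++ [1]) := by
  unfold bO
  rw [List.getLastD_concat, if_pos (by decide)]

lemma b1_app1 (l : List ℕ) : b1 (l ++ [1]) = wB (l ++ [1]) := by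
  unfold b1
  rw [List.getLastD_concat, if_pos rfl]

lemma bE_app1 (l : List ℕ) : bE (l ++ [1]) = 0 := by
  unfold bE
  rw [List.getLastD_concat, if_pos (by decide)]

lemma wB_app1 (l : List ℕ) (h : l ≠ []) (h2 : l.length = 1 → l.getLastD 0 ≠ 1) :
    wB (l ++ [1]) = -(X l.sum) * (wB l + MvPolynomial.C (1 / 2 : ℚ) * b1 l) := by
  obtain ⟨m, a, rfl⟩ := exists_concat h
  simp only [wB, b1]
  have hm : m = [] → a ≠ 1 := by
    intro hm'
    subst hm'
    exact h2 (by simp) ∘ (by simp only [List.nil_append, List.getLastD_concat]; exact fun e => e)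
  rw [curly_concat _ 1 h, thetaTilde_concat_one m a hm, List.getLastD_concat]
  simp only [List.length_append, List.length_singleton]
  have hC : (MvPolynomial.C (3 / 2 : ℚ) : MvPolynomial ℕ ℚ)
      = MvPolynomial.C (1 / 2 : ℚ) + 1 := by
    rw [← map_one (MvPolynomial.C (σ := ℕ) (R := ℚ)), ← map_add]
    norm_num
  by_cases ha : a = 1
  · rw [if_pos ha, if_pos ha]
    simp only [map_mul, map_pow, map_neg, map_one, hC]
    ring
  · rw [if_neg ha, if_neg ha, add_zero]
    simp only [map_mul, map_pow, map_neg, map_one, hC]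
    ring

/-! ### sum-level recursions -/

lemma SwA_split (n : ℕ) : S wA n = S aO n + S aE n := by
  rw [S, S, S, ← sum_map_add]
  refine congrArg _ (List.map_congr_left fun l _ => ?_)
  unfold aO aE
  by_cases hodd : Odd (l.getLastD 0)
  · rw [if_pos hodd, if_pos hodd, add_zero]
  · rw [if_neg hodd, if_neg hodd, zero_add]

lemma SwB_split (n : ℕ) : S wB n = S bO n + S bE n := by
  rw [S, S, S, ← sum_map_add]
  refine congrArg _ (List.map_congr_left fun l _ => ?_)
  unfold bO bE
  by_cases hodd : Odd (l.getLastD 0)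
  · rw [if_pos hodd, if_pos hodd, add_zero]
  · rw [if_neg hodd, if_neg hodd, zero_add]

lemma SaO_rec (n : ℕ) :
    S aO (n + 2) = -(X (n + 2) : MvPolynomial ℕ ℚ)
        * (S wA (n + 1) + MvPolynomial.C (1 / 2 : ℚ) * S a1 (n + 1)) + S aE (n + 1) := by
  rw [S_rec]
  have e1 : (comps (n + 1)).map (fun l => aO (l ++ [1]))
      = (comps (n + 1)).map (fun l =>
          -(X (n + 2) : MvPolynomial ℕ ℚ)
            * (wA l + MvPolynomial.C (1 / 2 : ℚ) * a1 l)) := by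
    refine List.map_congr_left fun l hl => ?_
    obtain ⟨hs, hp⟩ := (mem_comps _ l).1 hl
    have hne : l ≠ [] := pos_sum_ne_nil hp (by omega)
    rw [aO_app1 l, wA_app1 l hne, hs, show 1 + (n + 1) = n + 2 by omega]
  have e2 : (comps (n + 1)).map (fun l => aO (incLast l)) = (comps (n + 1)).map aE := by
    refine List.map_congr_left fun l hl => ?_
    obtain ⟨hs, hp⟩ := (mem_comps _ l).1 hl
    exact aO_inc l (pos_sum_ne_nil hp (by omega))
  rw [e1, e2, List.sum_map_mul_left, sum_map_add, List.sum_map_mul_left]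
  rfl

lemma Sa1_rec (n : ℕ) :
    S a1 (n + 2) = -(X (n + 2) : MvPolynomial ℕ ℚ)
        * (S wA (n + 1) + MvPolynomial.C (1 / 2 : ℚ) * S a1 (n + 1)) := by
  rw [S_rec]
  have e1 : (comps (n + 1)).map (fun l => a1 (l ++ [1]))
      = (comps (n + 1)).map (fun l =>
          -(X (n + 2) : MvPolynomial ℕ ℚ)
            * (wA l + MvPolynomial.C (1 / 2 : ℚ) * a1 l)) := by
    refine List.map_congr_left fun l hl => ?_
    obtain ⟨hs, hp⟩ := (mem_comps _ l).1 hl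
    have hne : l ≠ [] := pos_sum_ne_nil hp (by omega)
    rw [a1_app1 l, wA_app1 l hne, hs, show 1 + (n + 1) = n + 2 by omega]
  have e2 : (comps (n + 1)).map (fun l => a1 (incLast l))
      = (comps (n + 1)).map (fun _ => (0 : MvPolynomial ℕ ℚ)) := by
    refine List.map_congr_left fun l hl => ?_
    obtain ⟨hs, hp⟩ := (mem_comps _ l).1 hl
    have hne : l ≠ [] := pos_sum_ne_nil hp (by omega)
    exact a1_inc l (getLastD_pos hp hne).ne'
  rw [e1, e2, List.sum_map_mul_left, sum_map_add, List.sum_map_mul_left]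
  simp [S]

lemma SaE_rec (n : ℕ) : S aE (n + 2) = S aO (n + 1) := by
  rw [S_rec]
  have e1 : (comps (n + 1)).map (fun l => aE (l ++ [1]))
      = (comps (n + 1)).map (fun _ => (0 : MvPolynomial ℕ ℚ)) :=
    List.map_congr_left fun l _ => aE_app1 l
  have e2 : (comps (n + 1)).map (fun l => aE (incLast l)) = (comps (n + 1)).map aO := by
    refine List.map_congr_left fun l hl => ?_
    obtain ⟨hs, hp⟩ := (mem_comps _ l).1 hl
    exact aE_inc l (pos_sum_ne_nil hp (by omega))
  rw [e1, e2]
  simp [S]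

lemma comps_len_one {n : ℕ} {l : List ℕ} (hl : l ∈ comps (n + 2)) (h1 : l.length = 1) :
    l.getLastD 0 ≠ 1 := by
  obtain ⟨hs, hp⟩ := (mem_comps _ l).1 hl
  obtain ⟨x, rfl⟩ := List.length_eq_one_iff.1 h1
  simp only [List.sum_cons, List.sum_nil, add_zero] at hs
  simp [hs]

lemma SbO_rec (n : ℕ) :
    S bO (n + 3) = -(X (n + 2) : MvPolynomial ℕ ℚ)
        * (S wB (n + 2) + MvPolynomial.C (1 / 2 : ℚ) * S b1 (n + 2)) + S bE (n + 2) := by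
  rw [S_rec]
  have e1 : (comps (n + 2)).map (fun l => bO (l ++ [1]))
      = (comps (n + 2)).map (fun l =>
          -(X (n + 2) : MvPolynomial ℕ ℚ)
            * (wB l + MvPolynomial.C (1 / 2 : ℚ) * b1 l)) := by
    refine List.map_congr_left fun l hl => ?_
    obtain ⟨hs, hp⟩ := (mem_comps _ l).1 hl
    have hne : l ≠ [] := pos_sum_ne_nil hp (by omega)
    rw [bO_app1 l, wB_app1 l hne (comps_len_one hl), hs]
  have e2 : (comps (n + 2)).map (fun l => bO (incLast l)) = (comps (n + 2)).map bE := by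
    refine List.map_congr_left fun l hl => ?_
    obtain ⟨hs, hp⟩ := (mem_comps _ l).1 hl
    exact bO_inc l (pos_sum_ne_nil hp (by omega))
  rw [e1, e2, List.sum_map_mul_left, sum_map_add, List.sum_map_mul_left]
  rfl

lemma Sb1_rec (n : ℕ) :
    S b1 (n + 3) = -(X (n + 2) : MvPolynomial ℕ ℚ)
        * (S wB (n + 2) + MvPolynomial.C (1 / 2 : ℚ) * S b1 (n + 2)) := by
  rw [S_rec]
  have e1 : (comps (n + 2)).map (fun l => b1 (l ++ [1]))
      = (comps (n + 2)).map (fun l =>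
          -(X (n + 2) : MvPolynomial ℕ ℚ)
            * (wB l + MvPolynomial.C (1 / 2 : ℚ) * b1 l)) := by
    refine List.map_congr_left fun l hl => ?_
    obtain ⟨hs, hp⟩ := (mem_comps _ l).1 hl
    have hne : l ≠ [] := pos_sum_ne_nil hp (by omega)
    rw [b1_app1 l, wB_app1 l hne (comps_len_one hl), hs]
  have e2 : (comps (n + 2)).map (fun l => b1 (incLast l))
      = (comps (n + 2)).map (fun _ => (0 : MvPolynomial ℕ ℚ)) := by
    refine List.map_congr_left fun l hl => ?_
    obtain ⟨hs, hp⟩ := (mem_comps _ l).1 hl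
    have hne : l ≠ [] := pos_sum_ne_nil hp (by omega)
    exact b1_inc l (getLastD_pos hp hne).ne'
  rw [e1, e2, List.sum_map_mul_left, sum_map_add, List.sum_map_mul_left]
  simp [S]

lemma SbE_rec (n : ℕ) : S bE (n + 2) = S bO (n + 1) := by
  rw [S_rec]
  have e1 : (comps (n + 1)).map (fun l => bE (l ++ [1]))
      = (comps (n + 1)).map (fun _ => (0 : MvPolynomial ℕ ℚ)) :=
    List.map_congr_left fun l _ => bE_app1 l
  have e2 : (comps (n + 1)).map (fun l => bE (incLast l)) = (comps (n + 1)).map bO := by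
    refine List.map_congr_left fun l hl => ?_
    obtain ⟨hs, hp⟩ := (mem_comps _ l).1 hl
    exact bE_inc l (pos_sum_ne_nil hp (by omega))
  rw [e1, e2]
  simp [S]

/-! ### the coefficient recursion -/

noncomputable def qPair : ℕ →
    (MvPolynomial ℕ ℚ × MvPolynomial ℕ ℚ) × (MvPolynomial ℕ ℚ × MvPolynomial ℕ ℚ)
  | 0 => ((0, 1), (2, 0))
  | j + 1 =>
    (((X (j + 1) - 1) * (qPair j).1.1
        + MvPolynomial.C (1 / 2 : ℚ) * X (j + 1) * (qPair j).2.1,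
      (X (j + 1) - 1) * (qPair j).1.2
        + MvPolynomial.C (1 / 2 : ℚ) * X (j + 1) * (qPair j).2.2),
     (X (j + 1) * (qPair j).1.1 + MvPolynomial.C (1 / 2 : ℚ) * X (j + 1) * (qPair j).2.1,
      X (j + 1) * (qPair j).1.2 + MvPolynomial.C (1 / 2 : ℚ) * X (j + 1) * (qPair j).2.2))

noncomputable def fm (j : ℕ) : MvPolynomial ℕ ℚ := (qPair j).1.1
noncomputable def gm (j : ℕ) : MvPolynomial ℕ ℚ := (qPair j).1.2
noncomputable def fp (j : ℕ) : MvPolynomial ℕ ℚ := (qPair j).2.1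
noncomputable def gp (j : ℕ) : MvPolynomial ℕ ℚ := (qPair j).2.2

lemma fm_succ (j : ℕ) : fm (j + 1)
    = (X (j + 1) - 1) * fm j + MvPolynomial.C (1 / 2 : ℚ) * X (j + 1) * fp j := rfl
lemma gm_succ (j : ℕ) : gm (j + 1)
    = (X (j + 1) - 1) * gm j + MvPolynomial.C (1 / 2 : ℚ) * X (j + 1) * gp j := rfl
lemma fp_succ (j : ℕ) : fp (j + 1)
    = X (j + 1) * fm j + MvPolynomial.C (1 / 2 : ℚ) * X (j + 1) * fp j := rfl
lemma gp_succ (j : ℕ) : gp (j + 1)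
    = X (j + 1) * gm j + MvPolynomial.C (1 / 2 : ℚ) * X (j + 1) * gp j := rfl

lemma sPair_eq (j : ℕ) :
    sPair j = (C (fm j) * X false + C (gm j) * X true,
               C (fp j) * X false + C (gp j) * X true) := by
  induction j with
  | zero =>
    show (X true, 2 * X false) = _
    simp [fm, gm, fp, gp, qPair, map_ofNat]
  | succ j ih =>
    rw [sPair, ih]
    dsimp only
    rw [Prod.mk.injEq]
    constructor
    · rw [fm_succ, gm_succ]
      simp only [map_add, map_mul, map_sub, map_one]
      ring
    · rw [fp_succ, gp_succ]
      simp only [map_add, map_mul, map_sub, map_one]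
      ring

/-! ### small values -/

lemma comps_zero : comps 0 = [[]] := rfl
lemma comps_one : comps 1 = [[1]] := rfl
lemma comps_two : comps 2 = [[1, 1], [2]] := rfl

lemma brk_singleton : brk [1] = X 1 := by
  rw [brk]
  simp [Finset.prod_range_one]

lemma curly_singleton : curly [1] = 1 := by
  rw [curly]
  simp

lemma curly_pair : curly [1, 1] = X 1 := by
  rw [curly]
  simp [Finset.prod_range_one]

lemma curly_twosing : curly [2] = 1 := by
  rw [curly]
  simp

lemma wA_singleton : wA [1] = -(X 1) := by
  rw [wA, brk_singleton, show theta [1] = 0 from rfl]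
  simp

lemma wB_singleton : wB [1] = -1 := by
  rw [wB, curly_singleton, show thetaTilde [1] = 0 from rfl]
  simp

lemma wB_pair : wB [1, 1] = X 1 := by
  rw [wB, curly_pair, show thetaTilde [1, 1] = 0 from rfl]
  simp

lemma wB_two : wB [2] = -1 := by
  rw [wB, curly_twosing, show thetaTilde [2] = 0 from rfl]
  simp

lemma SaO_zero : S aO 0 = 0 := by
  simp [S, comps_zero, aO, Nat.odd_iff]

lemma SbO_zero : S bO 0 = 0 := by
  simp [S, comps_zero, bO, Nat.odd_iff]

lemma SaO_one : S aO 1 = -(X 1) := by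
  simp [S, comps_one, aO, wA_singleton]

lemma Sa1_one : S a1 1 = -(X 1) := by
  simp [S, comps_one, a1, wA_singleton]

lemma SaE_one : S aE 1 = 0 := by
  simp [S, comps_one, aE]

lemma SbO_one : S bO 1 = -1 := by
  simp [S, comps_one, bO, wB_singleton]

lemma SbO_two : S bO 2 = X 1 := by
  simp [S, comps_two, bO, wB_pair, wB_two, Nat.odd_iff]

lemma Sb1_two : S b1 2 = X 1 := by
  simp [S, comps_two, b1, wB_pair, wB_two]

lemma SbE_two : S bE 2 = -1 := by
  simp [S, comps_two, bE, wB_pair, wB_two, Nat.odd_iff]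

/-! ### main induction -/

lemma main_forms (n : ℕ) :
    fm (n + 1) = (-1) ^ (n + 1) * (S aO (n + 1) + S aO n) ∧
    fp (n + 1) = (-1) ^ (n + 1) * S a1 (n + 1) ∧
    gm (n + 1) = (-1) ^ n * (S bO (n + 2) + S bO (n + 1)) ∧
    gp (n + 1) = (-1) ^ n * S b1 (n + 2) ∧
    S aE (n + 1) = S aO n ∧
    S bE (n + 2) = S bO (n + 1) := by
  induction n with
  | zero =>
    have hhalf : MvPolynomial.C (1 / 2 : ℚ) * (2 : MvPolynomial ℕ ℚ) = 1 := by
      rw [show (2 : MvPolynomial ℕ ℚ) = MvPolynomial.C (2 : ℚ) from (map_ofNat _ 2).symm,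
        ← map_mul]
      norm_num
    refine ⟨?_, ?_, ?_, ?_, ?_, ?_⟩
    · rw [fm_succ, SaO_one, SaO_zero]
      show (X 1 - 1) * 0 + MvPolynomial.C (1 / 2 : ℚ) * X 1 * 2 = _
      rw [mul_comm (MvPolynomial.C (1 / 2 : ℚ)) (X 1), mul_assoc, hhalf]
      ring
    · rw [fp_succ, Sa1_one]
      show X 1 * 0 + MvPolynomial.C (1 / 2 : ℚ) * X 1 * 2 = _
      rw [mul_comm (MvPolynomial.C (1 / 2 : ℚ)) (X 1), mul_assoc, hhalf]
      ring
    · rw [gm_succ, SbO_two, SbO_one]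
      show (X 1 - 1) * 1 + MvPolynomial.C (1 / 2 : ℚ) * X 1 * 0 = _
      ring
    · rw [gp_succ, Sb1_two]
      show X 1 * 1 + MvPolynomial.C (1 / 2 : ℚ) * X 1 * 0 = _
      ring
    · rw [SaE_one, SaO_zero]
    · rw [SbE_two, SbO_one]
  | succ n ih =>
    obtain ⟨ihfm, ihfp, ihgm, ihgp, ihaE, ihbE⟩ := ih
    refine ⟨?_, ?_, ?_, ?_, ?_, ?_⟩
    · rw [fm_succ, ihfm, ihfp, SaO_rec n, SwA_split, ihaE]
      ring
    · rw [fp_succ, ihfm, ihfp, Sa1_rec n, SwA_split, ihaE]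
      ring
    · rw [gm_succ, ihgm, ihgp, SbO_rec n, SwB_split, ihbE]
      ring
    · rw [gp_succ, ihgm, ihgp, Sb1_rec n, SwB_split, ihbE]
      ring
    · exact SaE_rec n
    · exact SbE_rec (n + 1)

/-! ### telescoping -/

lemma sum_fm (α : ℕ) : ∑ j ∈ Finset.range (α + 1), fm j = (-1) ^ α * S aO α := by
  induction α with
  | zero =>
    rw [SaO_zero, Finset.sum_range_one]
    show (0 : MvPolynomial ℕ ℚ) = (-1) ^ 0 * 0
    ring
  | succ k ih =>
    rw [Finset.sum_range_succ, ih, (main_forms k).1]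
    ring

lemma sum_gm (α : ℕ) : ∑ j ∈ Finset.range (α + 1), gm j = (-1) ^ (α + 1) * S bO (α + 1) := by
  induction α with
  | zero =>
    rw [SbO_one, Finset.sum_range_one]
    show (1 : MvPolynomial ℕ ℚ) = (-1) ^ (0 + 1) * (-1)
    ring
  | succ k ih =>
    rw [Finset.sum_range_succ, ih, (main_forms k).2.2.1]
    ring

lemma F_eqA (k : ℕ) (l : List ℕ) :
    (if Odd (l.getLastD 0) then
        MvPolynomial.C ((-1 : ℚ) ^ (l.length + k) * (3 / 2 : ℚ) ^ theta l) * brk l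
      else 0)
      = (-1) ^ k * aO l := by
  unfold aO wA
  by_cases h : Odd (l.getLastD 0)
  · rw [if_pos h, if_pos h]
    simp only [pow_add, map_mul, map_pow, map_neg, map_one]
    ring
  · rw [if_neg h, if_neg h, mul_zero]

lemma F_eqB (k : ℕ) (l : List ℕ) :
    (if Odd (l.getLastD 0) then
        MvPolynomial.C ((-1 : ℚ) ^ (l.length + k) * (3 / 2 : ℚ) ^ thetaTilde l) * curly l
      else 0)
      = (-1) ^ k * bO l := by
  unfold bO wB
  by_cases h : Odd (l.getLastD 0)
  · rw [if_pos h, if_pos h]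
    simp only [pow_add, map_mul, map_pow, map_neg, map_one]
    ring
  · rw [if_neg h, if_neg h, mul_zero]


/-- For every `α ≥ 2`, the polynomial `r_{α−1} = Σ_{j=0}^{α−1} s^-_j` equals
`y·Σ_{c ⊨ α−1, last part odd} (−1)^{|c|+α−1}·(3/2)^{Θ(c)}·[c]
 + z·Σ_{c ⊨ α, last part odd} (−1)^{|c|+α}·(3/2)^{Θ̃(c)}·{c}`. -/
theorem r_poly_expansion (α : ℕ) (hα : 2 ≤ α) :
    ∑ j ∈ Finset.range α, smP j =
      X false *
        C (∑ c : Composition (α - 1),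
            if Odd (c.blocks.getLastD 0) then
              MvPolynomial.C ((-1 : ℚ) ^ (c.length + α - 1) * (3 / 2 : ℚ) ^ theta c.blocks) *
                brk c.blocks
            else 0) +
      X true *
        C (∑ c : Composition α,
            if Odd (c.blocks.getLastD 0) then
              MvPolynomial.C ((-1 : ℚ) ^ (c.length + α) * (3 / 2 : ℚ) ^ thetaTilde c.blocks) *
                curly c.blocks
            else 0) := by
  obtain ⟨β, rfl⟩ : ∃ β, α = β + 2 := ⟨α - 2, by omega⟩
  have hA : (∑ c : Composition (β + 1),
      if Odd (c.blocks.getLastD 0) then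
        MvPolynomial.C ((-1 : ℚ) ^ (c.blocks.length + (β + 1)) * (3 / 2 : ℚ) ^ theta c.blocks)
          * brk c.blocks
      else 0) = (-1) ^ (β + 1) * S aO (β + 1) := by
    have e1 : (∑ c : Composition (β + 1),
        if Odd (c.blocks.getLastD 0) then
          MvPolynomial.C ((-1 : ℚ) ^ (c.blocks.length + (β + 1)) * (3 / 2 : ℚ) ^ theta c.blocks)
            * brk c.blocks
        else 0) = ∑ c : Composition (β + 1), (-1) ^ (β + 1) * aO c.blocks :=
      Finset.sum_congr rfl fun c _ => F_eqA (β + 1) c.blocks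
    rw [e1, ← Finset.mul_sum, sum_composition (β + 1) aO]
    rfl
  have hB : (∑ c : Composition (β + 2),
      if Odd (c.blocks.getLastD 0) then
        MvPolynomial.C ((-1 : ℚ) ^ (c.blocks.length + (β + 2)) * (3 / 2 : ℚ) ^ thetaTilde c.blocks)
          * curly c.blocks
      else 0) = (-1) ^ (β + 2) * S bO (β + 2) := by
    have e1 : (∑ c : Composition (β + 2),
        if Odd (c.blocks.getLastD 0) then
          MvPolynomial.C ((-1 : ℚ) ^ (c.blocks.length + (β + 2)) * (3 / 2 : ℚ) ^ thetaTilde c.blocks)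
            * curly c.blocks
        else 0) = ∑ c : Composition (β + 2), (-1) ^ (β + 2) * bO c.blocks :=
      Finset.sum_congr rfl fun c _ => F_eqB (β + 2) c.blocks
    rw [e1, ← Finset.mul_sum, sum_composition (β + 2) bO]
    rfl
  have hL : ∑ j ∈ Finset.range (β + 2), smP j
      = C (∑ j ∈ Finset.range (β + 2), fm j) * X false
        + C (∑ j ∈ Finset.range (β + 2), gm j) * X true := by
    rw [map_sum, map_sum, Finset.sum_mul, Finset.sum_mul, ← Finset.sum_add_distrib]
    refine Finset.sum_congr rfl fun j _ => ?_
    rw [smP, sPair_eq]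
  have hfm := sum_fm (β + 1)
  have hgm := sum_gm (β + 1)
  rw [show β + 1 + 1 = β + 2 from rfl] at hfm hgm
  have hfinal : ∑ j ∈ Finset.range (β + 2), smP j =
      X false *
        C (∑ c : Composition (β + 1),
            if Odd (c.blocks.getLastD 0) then
              MvPolynomial.C ((-1 : ℚ) ^ (c.blocks.length + (β + 1)) * (3 / 2 : ℚ) ^ theta c.blocks) *
                brk c.blocks
            else 0) +
      X true *
        C (∑ c : Composition (β + 2),
            if Odd (c.blocks.getLastD 0) then
              MvPolynomial.C ((-1 : ℚ) ^ (c.blocks.length + (β + 2)) * (3 / 2 : ℚ) ^ thetaTilde c.blocks) *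
                curly c.blocks
            else 0) := by
    rw [hL, hfm, hgm, hA, hB]
    ring
  exact hfinal
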